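/- Let F be a field, n ≥ 2, T a set, k ≤ n, t_1,...,t_k ∈ T, and let G = GL(n,F). Let u, v : T → F^n be maps in V(t_1,...,t_k), i.e., rk(u) = k = rank([u(t_1),...,u(t_k)]) and rk(v) = k = rank([v(t_1),...,v(t_k)]). Then u and v are G-equivalent (there exists g ∈ GL(n,F) with v(t) = g·u(t) for all t ∈ T) if and only if there exist row indices 1 ≤ i_1 < ... < i_k ≤ n and 1 ≤ j_1 < ... < j_k ≤ n such that det([u(t_1),...,u(t_k)]_{i_1,...,i_k}) ≠ 0, det([v(t_1),...,v(t_k)]_{j_1,...,j_k}) ≠ 0, and for all t ∈ T: ([u(t_1),...,u(t_k)]_{i_1,...,i_k})^{-1} u(t)_{i_1,...,i_k} = ([v(t_1),...,v(t_k)]_{j_1,...,j_k})^{-1} v(t)_{j_1,...,j_k}. -/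

import Mathlib

open Matrix

/-- The `n × k` matrix whose columns are `u (ts 1), ..., u (ts k)`. -/
def colMat {F : Type*} [Field F] {T : Type*} {n k : ℕ} (u : T → Fin n → F) (ts : Fin k → T) :
    Matrix (Fin n) (Fin k) F :=
  Matrix.of fun i j => u (ts j) i

/-- The rank of a map `u : T → Fⁿ`: the dimension of the span of its image. -/
noncomputable def mapRank (F : Type*) [Field F] {T : Type*} {n : ℕ} (u : T → Fin n → F) : ℕ :=
  Module.finrank F (Submodule.span F (Set.range u))

section Aux
variable {F : Type*} [Field F] {n k : ℕ}

/-- A matrix of full column-count rank has a strictly increasing choice of rows with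
nonzero minor. -/
lemma exists_strictMono_det_ne_zero (M : Matrix (Fin n) (Fin k) F) (h : M.rank = k) :
    ∃ ι : Fin k → Fin n, StrictMono ι ∧ (M.submatrix ι id).det ≠ 0 := by
  rcases Nat.eq_zero_or_pos k with hk0 | hk0
  · subst hk0
    refine ⟨Fin.elim0, fun i => i.elim0, ?_⟩
    simp [Matrix.det_fin_zero]
  -- rows of M span ⊤
  have hspan : Submodule.span F (Set.range M) = ⊤ := by
    apply Submodule.eq_top_of_finrank_eq
    rw [show Set.range M = Set.range (Matrix.row M) from rfl, ← Matrix.rank_eq_finrank_span_row, h, Module.finrank_pi]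
    simp
  obtain ⟨b, hbsub, hbspan, hbli⟩ := exists_linearIndependent F (Set.range M)
  have hbfin : b.Finite := (Set.finite_range M).subset hbsub
  haveI := hbfin.fintype
  have hcard : b.toFinset.card = k := by
    have h2 := finrank_span_set_eq_card hbli
    rw [hbspan, hspan] at h2
    simpa [Module.finrank_pi] using h2.symm
  have hn0 : 0 < n := lt_of_lt_of_le hk0 (h ▸ M.rank_le_height)
  haveI : Nonempty (Fin n) := ⟨⟨0, hn0⟩⟩
  classical
  set g : (Fin k → F) → Fin n := fun x =>
    if hx : x ∈ Set.range M then hx.choose else Classical.arbitrary _ with hg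
  have hgM : ∀ x ∈ b, M (g x) = x := by
    intro x hx
    have hxr : x ∈ Set.range M := hbsub hx
    simp only [hg, dif_pos hxr]
    exact hxr.choose_spec
  have hinj : Set.InjOn g b.toFinset := by
    intro x hx y hy hxy
    simp only [Finset.coe_mem, Finset.mem_coe, Set.mem_toFinset] at hx hy
    rw [← hgM x hx, ← hgM y hy, hxy]
  set s : Finset (Fin n) := b.toFinset.image g with hs
  have hscard : s.card = k := by
    rw [hs, Finset.card_image_of_injOn hinj, hcard]
  have hmem : ∀ i ∈ s, M i ∈ b := by
    intro i hi
    rw [hs, Finset.mem_image] at hi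
    obtain ⟨x, hx, rfl⟩ := hi
    rw [Set.mem_toFinset] at hx
    rw [hgM x hx]; exact hx
  have hrowsLI : LinearIndependent F (fun i : s => M (i : Fin n)) := by
    have hφinj : Function.Injective
        (fun i : s => (⟨M (i : Fin n), hmem i i.2⟩ : b)) := by
      intro i j hij
      have hMij : M (i : Fin n) = M (j : Fin n) := congrArg Subtype.val hij
      have hi : (i : Fin n) ∈ Finset.image g b.toFinset := i.2
      have hj : (j : Fin n) ∈ Finset.image g b.toFinset := j.2
      obtain ⟨x, hx, hxi⟩ := Finset.mem_image.mp hi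
      obtain ⟨y, hy, hyj⟩ := Finset.mem_image.mp hj
      rw [Set.mem_toFinset] at hx hy
      have hxval : M (i : Fin n) = x := by rw [← hxi]; exact hgM x hx
      have hyval : M (j : Fin n) = y := by rw [← hyj]; exact hgM y hy
      have hxy : x = y := by rw [← hxval, ← hyval, hMij]
      apply Subtype.ext
      rw [← hxi, ← hyj, hxy]
    exact hbli.comp _ hφinj
  set e := s.orderIsoOfFin hscard with he
  refine ⟨fun j => (e j : Fin n), fun a b hab => by
    exact_mod_cast e.strictMono hab, ?_⟩
  have hLI : LinearIndependent F (fun j : Fin k => (M.submatrix (fun j => (e j : Fin n)) id) j) := by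
    have : (fun j : Fin k => (M.submatrix (fun j => (e j : Fin n)) id) j)
        = (fun i : s => M (i : Fin n)) ∘ (fun j => e j) := by
      funext j; rfl
    rw [this]
    exact hrowsLI.comp _ (e.injective)
  have := Matrix.linearIndependent_rows_iff_isUnit.mp hLI
  exact (Matrix.isUnit_iff_isUnit_det _).mp this |>.ne_zero

lemma exists_rep {T : Type*} (u : T → Fin n → F) (ts : Fin k → T)
    (hu : mapRank F u = k) (hU : (colMat u ts).rank = k) (t : T) :
    ∃ c : Fin k → F, (colMat u ts) *ᵥ c = u t := by
  have hle : Submodule.span F (Set.range (colMat u ts)ᵀ) ≤ Submodule.span F (Set.range u) := by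
    apply Submodule.span_le.mpr
    rintro _ ⟨j, rfl⟩
    have : (colMat u ts)ᵀ j = u (ts j) := rfl
    rw [this]
    exact Submodule.subset_span ⟨ts j, rfl⟩
  have heq : Submodule.span F (Set.range (colMat u ts)ᵀ) = Submodule.span F (Set.range u) := by
    apply Submodule.eq_of_le_of_finrank_le hle
    rw [show Set.range (colMat u ts)ᵀ = Set.range (Matrix.col (colMat u ts)) from rfl,
      ← Matrix.rank_eq_finrank_span_cols, hU]
    exact le_of_eq hu
  have hmem : u t ∈ Submodule.span F (Set.range (colMat u ts)ᵀ) :=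
    heq ▸ Submodule.subset_span ⟨t, rfl⟩
  rw [show Set.range (colMat u ts)ᵀ = Set.range (Matrix.col (colMat u ts)) from rfl,
    ← Matrix.range_mulVecLin] at hmem
  obtain ⟨c, hc⟩ := hmem
  exact ⟨c, hc⟩

lemma inv_mulVec_eq {A : Matrix (Fin n) (Fin k) F} {ι : Fin k → Fin n}
    (hdet : (A.submatrix ι id).det ≠ 0) {c : Fin k → F} {w : Fin n → F} (hw : A *ᵥ c = w) :
    (A.submatrix ι id)⁻¹ *ᵥ (fun m => w (ι m)) = c := by
  have h1 : (fun m => w (ι m)) = (A.submatrix ι id) *ᵥ c := by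
    funext m
    rw [← hw]
    simp [Matrix.mulVec, dotProduct, Matrix.submatrix_apply]
  rw [h1, Matrix.mulVec_mulVec, Matrix.nonsing_inv_mul _ (isUnit_iff_ne_zero.mpr hdet),
    Matrix.one_mulVec]

lemma exists_GL_matrix {A B : Matrix (Fin n) (Fin k) F} (hA : A.rank = k) (hB : B.rank = k) :
    ∃ g : GL (Fin n) F, ∀ c : Fin k → F,
      (g : Matrix (Fin n) (Fin n) F) *ᵥ (A *ᵥ c) = B *ᵥ c := by
  have colsLI : ∀ (M : Matrix (Fin n) (Fin k) F), M.rank = k →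
      Function.Injective M.mulVecLin := by
    intro M hM
    have : LinearIndependent F (fun j => Mᵀ j) := by
      rw [linearIndependent_iff_card_eq_finrank_span]
      rw [Set.finrank, show (Set.range fun j => Mᵀ j) = Set.range (Matrix.col M) from rfl,
        ← Matrix.rank_eq_finrank_span_cols, hM, Fintype.card_fin]
    exact Matrix.mulVec_injective_iff.mpr this
  have injA := colsLI A hA
  have injB := colsLI B hB
  set LA := A.mulVecLin with hLA
  set LB := B.mulVecLin with hLB
  let eA : (Fin k → F) ≃ₗ[F] LinearMap.range LA := LinearEquiv.ofInjective LA injA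
  let eB : (Fin k → F) ≃ₗ[F] LinearMap.range LB := LinearEquiv.ofInjective LB injB
  obtain ⟨CA, hCA⟩ := Submodule.exists_isCompl (LinearMap.range LA)
  obtain ⟨CB, hCB⟩ := Submodule.exists_isCompl (LinearMap.range LB)
  have hfrA : Module.finrank F (LinearMap.range LA) = k := hA
  have hfrB : Module.finrank F (LinearMap.range LB) = k := hB
  have hCAB : Module.finrank F CA = Module.finrank F CB := by
    have h1 := Submodule.finrank_add_eq_of_isCompl hCA
    have h2 := Submodule.finrank_add_eq_of_isCompl hCB
    rw [hfrA] at h1; rw [hfrB] at h2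
    omega
  obtain ⟨eC⟩ := FiniteDimensional.nonempty_linearEquiv_of_finrank_eq hCAB
  let e : (Fin n → F) ≃ₗ[F] (Fin n → F) :=
    (Submodule.prodEquivOfIsCompl (LinearMap.range LA) CA hCA).symm ≪≫ₗ
      (((eA.symm ≪≫ₗ eB).prodCongr eC) ≪≫ₗ Submodule.prodEquivOfIsCompl (LinearMap.range LB) CB hCB)
  have key : ∀ x : Fin k → F, e (LA x) = LB x := by
    intro x
    have h1 : (Submodule.prodEquivOfIsCompl (LinearMap.range LA) CA hCA).symm (LA x)
        = ((eA x : LinearMap.range LA), (0 : CA)) := by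
      exact Submodule.prodEquivOfIsCompl_symm_apply_left (LinearMap.range LA) CA hCA (eA x)
    show (Submodule.prodEquivOfIsCompl (LinearMap.range LB) CB hCB)
        (((eA.symm ≪≫ₗ eB).prodCongr eC) ((Submodule.prodEquivOfIsCompl (LinearMap.range LA) CA hCA).symm (LA x))) = LB x
    rw [h1]
    have h2 : ((eA.symm ≪≫ₗ eB).prodCongr eC) ((eA x : LinearMap.range LA), (0 : CA))
        = (eB x, (0 : CB)) := by
      have hr : ((eA.symm ≪≫ₗ eB).prodCongr eC) ((eA x : LinearMap.range LA), (0 : CA))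
          = ((eA.symm ≪≫ₗ eB) (eA x), eC 0) := rfl
      rw [hr, eC.map_zero]
      congr 1
      show eB (eA.symm (eA x)) = eB x
      rw [LinearEquiv.symm_apply_apply]
    rw [h2]
    rw [Submodule.coe_prodEquivOfIsCompl' (LinearMap.range LB) CB hCB]
    simp only [ZeroMemClass.coe_zero, add_zero]
    rfl
  have hcomp1 : LinearMap.toMatrix' (e : (Fin n → F) →ₗ[F] (Fin n → F)) *
      LinearMap.toMatrix' (e.symm : (Fin n → F) →ₗ[F] (Fin n → F)) = 1 := by
    rw [← LinearMap.toMatrix'_comp, ← LinearMap.toMatrix'_id (R := F) (n := Fin n)]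
    congr 1
    ext x
    simp
  have hcomp2 : LinearMap.toMatrix' (e.symm : (Fin n → F) →ₗ[F] (Fin n → F)) *
      LinearMap.toMatrix' (e : (Fin n → F) →ₗ[F] (Fin n → F)) = 1 := by
    rw [← LinearMap.toMatrix'_comp, ← LinearMap.toMatrix'_id (R := F) (n := Fin n)]
    congr 1
    ext x
    simp
  refine ⟨⟨LinearMap.toMatrix' (e : (Fin n → F) →ₗ[F] (Fin n → F)),
      LinearMap.toMatrix' (e.symm : (Fin n → F) →ₗ[F] (Fin n → F)), hcomp1, hcomp2⟩, ?_⟩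
  intro c
  have : (LinearMap.toMatrix' (e : (Fin n → F) →ₗ[F] (Fin n → F))) *ᵥ (A *ᵥ c) = e (A *ᵥ c) := by
    rw [← Matrix.toLin'_apply, Matrix.toLin'_toMatrix']
    rfl
  rw [this]
  exact key c

end Aux

/-- Theorem 1: for `u, v ∈ V(t_1,...,t_k)`, the maps `u` and `v` are
`GL(n,F)`-equivalent iff there are strictly increasing row-index choices `ι, ι'` with
nonsingular corresponding minors such that
`([u(t_1),...,u(t_k)]_ι)⁻¹ u(t)_ι = ([v(t_1),...,v(t_k)]_{ι'})⁻¹ v(t)_{ι'}` for all `t`. -/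
theorem GL_equivalent_iff_invariants {F : Type*} [Field F] {T : Type*} {n k : ℕ}
    (hn : 2 ≤ n) (hk : k ≤ n) (ts : Fin k → T) (u v : T → Fin n → F)
    (hu : mapRank F u = k) (hU : (colMat u ts).rank = k)
    (hv : mapRank F v = k) (hV : (colMat v ts).rank = k) :
    (∃ g : GL (Fin n) F, ∀ t : T, v t = (g : Matrix (Fin n) (Fin n) F).mulVec (u t)) ↔
      ∃ ι ι' : Fin k → Fin n, StrictMono ι ∧ StrictMono ι' ∧
        ((colMat u ts).submatrix ι id).det ≠ 0 ∧
        ((colMat v ts).submatrix ι' id).det ≠ 0 ∧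
        ∀ t : T,
          ((colMat u ts).submatrix ι id)⁻¹.mulVec (fun m => u t (ι m)) =
            ((colMat v ts).submatrix ι' id)⁻¹.mulVec (fun m => v t (ι' m)) := by
  constructor
  · rintro ⟨g, hg⟩
    obtain ⟨ι, hι, hdet⟩ := exists_strictMono_det_ne_zero _ hU
    obtain ⟨ι', hι', hdet'⟩ := exists_strictMono_det_ne_zero _ hV
    refine ⟨ι, ι', hι, hι', hdet, hdet', fun t => ?_⟩
    obtain ⟨c, hc⟩ := exists_rep u ts hu hU t
    have hBA : colMat v ts = (g : Matrix (Fin n) (Fin n) F) * colMat u ts := by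
      ext i j
      rw [Matrix.mul_apply]
      have : v (ts j) i = ((g : Matrix (Fin n) (Fin n) F).mulVec (u (ts j))) i := by
        rw [← hg (ts j)]
      simpa [colMat, Matrix.mulVec, dotProduct] using this
    have hvc : colMat v ts *ᵥ c = v t := by
      rw [hBA, ← Matrix.mulVec_mulVec, hc, ← hg t]
    rw [inv_mulVec_eq hdet hc, inv_mulVec_eq hdet' hvc]
  · rintro ⟨ι, ι', hι, hι', hdet, hdet', hinv⟩
    obtain ⟨g, hg⟩ := exists_GL_matrix hU hV
    refine ⟨g, fun t => ?_⟩
    obtain ⟨c, hc⟩ := exists_rep u ts hu hU t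
    obtain ⟨d, hd⟩ := exists_rep v ts hv hV t
    have hcd : c = d := by
      have h1 := inv_mulVec_eq hdet hc
      have h2 := inv_mulVec_eq hdet' hd
      rw [← h1, ← h2]
      exact hinv t
    rw [← hd, ← hcd, ← hc]
    exact (hg c).symm
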